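/- Let ω > 0, u₀ > 0, u₁ ≠ 0, and x₀, p₀ ∈ ℝ. Set V(t) = u₁ t + u₀ and τ(t) = (1/u₁)(1/u₀ − 1/V(t)), defined on the interval J of times t with V(t) > 0 (note 0 ∈ J). Then the function x(t) = V(t) · [ cos(ω τ(t)) · (x₀/u₀) + (1/ω) sin(ω τ(t)) · (−u₁ x₀ + u₀ p₀) ] satisfies x''(t) + (ω²/V(t)⁴) x(t) = 0 for all t ∈ J, with x(0) = x₀ and x'(0) = p₀. -/

import Mathlib

/-- For `ω > 0`, `u₀ > 0`, `u₁ ≠ 0`, `V(t) = u₁t + u₀`,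
`τ(t) = (1/u₁)(1/u₀ − 1/V(t))` on `J = {t | V(t) > 0}` (which contains `0`), the
function `x(t) = V(t)[cos(ωτ)·(x₀/u₀) + (1/ω)sin(ωτ)·(−u₁x₀ + u₀p₀)]` satisfies
`x'' + (ω²/V⁴) x = 0` on `J`, with `x(0) = x₀` and `x'(0) = p₀`. -/
theorem tdfho_inverse_quartic_frequency_solution
    (ω u₀ u₁ x₀ p₀ : ℝ) (hω : 0 < ω) (hu₀ : 0 < u₀) (hu₁ : u₁ ≠ 0)
    (V : ℝ → ℝ) (hV : ∀ t, V t = u₁ * t + u₀)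
    (τ : ℝ → ℝ) (hτ : ∀ t, τ t = (1 / u₁) * (1 / u₀ - 1 / V t))
    (J : Set ℝ) (hJ : J = {t : ℝ | 0 < V t})
    (x : ℝ → ℝ)
    (hx : ∀ t, x t = V t * (Real.cos (ω * τ t) * (x₀ / u₀) +
      (1 / ω) * Real.sin (ω * τ t) * (-u₁ * x₀ + u₀ * p₀))) :
    (0 : ℝ) ∈ J ∧
      (∀ t ∈ J, deriv (deriv x) t + ω ^ 2 / (V t) ^ 4 * x t = 0) ∧
      x 0 = x₀ ∧ deriv x 0 = p₀ := by
  have hωne : ω ≠ 0 := ne_of_gt hω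
  have hu₀ne : u₀ ≠ 0 := ne_of_gt hu₀
  have hVfun : V = fun t => u₁ * t + u₀ := funext hV
  have hV0 : V 0 = u₀ := by rw [hV]; ring
  have hτ0 : τ 0 = 0 := by rw [hτ, hV0]; ring
  set A := x₀ / u₀ with hA
  set B := -u₁ * x₀ + u₀ * p₀ with hB
  set x1 : ℝ → ℝ := fun t =>
    u₁ * (Real.cos (ω * τ t) * A + (1/ω) * Real.sin (ω * τ t) * B) +
    (1 / V t) * (-ω * Real.sin (ω * τ t) * A + Real.cos (ω * τ t) * B) with hx1def
  have hVd : ∀ t, HasDerivAt V u₁ t := by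
    intro t
    rw [hVfun]; simpa using ((hasDerivAt_id t).const_mul u₁).add_const u₀
  have hτd : ∀ t, V t ≠ 0 → HasDerivAt τ (1 / (V t)^2) t := by
    intro t ht
    have h1 : HasDerivAt (fun s => u₁ * s + u₀) u₁ t := by
      simpa using ((hasDerivAt_id t).const_mul u₁).add_const u₀
    have h2 : HasDerivAt (fun s => (u₁ * s + u₀)⁻¹) (-(u₁ / (u₁*t+u₀)^2)) t := by
      have h := h1.inv (by rw [← hV t]; exact ht)
      simp only [div_eq_mul_inv, neg_mul] at h ⊢
      exact h
    have h3 : HasDerivAt (fun s => (1/u₁) * (1/u₀ - (u₁*s+u₀)⁻¹))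
        ((1/u₁) * (0 - -(u₁/(u₁*t+u₀)^2))) t :=
      ((hasDerivAt_const t (1/u₀)).sub h2).const_mul (1/u₁)
    have hτeq : τ = fun s => (1/u₁) * (1/u₀ - (u₁*s+u₀)⁻¹) := by
      funext s; rw [hτ, hV, one_div (u₁*s+u₀)]
    rw [hτeq]
    convert h3 using 1
    rw [hV]
    field_simp
    ring
  have hxd : ∀ t, V t ≠ 0 → HasDerivAt x (x1 t) t := by
    intro t ht
    have hτt := hτd t ht
    have hωτ : HasDerivAt (fun s => ω * τ s) (ω * (1/(V t)^2)) t := hτt.const_mul ω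
    have hcos : HasDerivAt (fun s => Real.cos (ω * τ s))
        (-Real.sin (ω * τ t) * (ω * (1/(V t)^2))) t := hωτ.cos
    have hsin : HasDerivAt (fun s => Real.sin (ω * τ s))
        (Real.cos (ω * τ t) * (ω * (1/(V t)^2))) t := hωτ.sin
    have hg : HasDerivAt (fun s => Real.cos (ω * τ s) * A + (1/ω) * Real.sin (ω * τ s) * B)
        ((-Real.sin (ω * τ t) * (ω * (1/(V t)^2))) * A +
          (1/ω) * (Real.cos (ω * τ t) * (ω * (1/(V t)^2))) * B) t :=
      (hcos.mul_const A).add ((hsin.const_mul (1/ω)).mul_const B)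
    have hxd' := (hVd t).mul hg
    have hxeq : x = fun s => V s * (Real.cos (ω * τ s) * A + (1/ω) * Real.sin (ω * τ s) * B) := by
      funext s; rw [hx]
    rw [hxeq]
    refine hxd'.congr_deriv ?_
    simp only [hx1def]
    field_simp
  set x2 : ℝ → ℝ := fun t =>
    -(ω^2) / (V t)^3 * (Real.cos (ω * τ t) * A + (1/ω) * Real.sin (ω * τ t) * B) with hx2def
  have hx1d : ∀ t, V t ≠ 0 → HasDerivAt x1 (x2 t) t := by
    intro t ht
    have hτt := hτd t ht
    have hωτ : HasDerivAt (fun s => ω * τ s) (ω * (1/(V t)^2)) t := hτt.const_mul ω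
    have hcos : HasDerivAt (fun s => Real.cos (ω * τ s))
        (-Real.sin (ω * τ t) * (ω * (1/(V t)^2))) t := hωτ.cos
    have hsin : HasDerivAt (fun s => Real.sin (ω * τ s))
        (Real.cos (ω * τ t) * (ω * (1/(V t)^2))) t := hωτ.sin
    have hg : HasDerivAt (fun s => u₁ * (Real.cos (ω * τ s) * A + (1/ω) * Real.sin (ω * τ s) * B))
        (u₁ * ((-Real.sin (ω * τ t) * (ω * (1/(V t)^2))) * A +
          (1/ω) * (Real.cos (ω * τ t) * (ω * (1/(V t)^2))) * B)) t :=
      ((hcos.mul_const A).add ((hsin.const_mul (1/ω)).mul_const B)).const_mul u₁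
    have hVinv : HasDerivAt (fun s => 1 / V s) (-(u₁ / (V t)^2)) t := by
      have h := (hVd t).inv ht
      simp only [div_eq_mul_inv, neg_mul, one_mul] at h ⊢
      exact h
    have hh : HasDerivAt (fun s => -ω * Real.sin (ω * τ s) * A + Real.cos (ω * τ s) * B)
        (-ω * (Real.cos (ω * τ t) * (ω * (1/(V t)^2))) * A +
          (-Real.sin (ω * τ t) * (ω * (1/(V t)^2))) * B) t := by
      have h := (((hsin.const_mul (-ω)).mul_const A).add (hcos.mul_const B))
      exact h
    have h2 := hVinv.mul hh
    have := hg.add h2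
    refine this.congr_deriv ?_
    simp only [hx2def]
    field_simp
    ring
  have hJopen : IsOpen J := by
    rw [hJ, hVfun]
    exact isOpen_lt continuous_const ((continuous_const.mul continuous_id).add continuous_const)
  have h0J : (0:ℝ) ∈ J := by rw [hJ]; simp only [Set.mem_setOf_eq, hV0]; exact hu₀
  refine ⟨h0J, ?_, ?_, ?_⟩
  · intro t htJ
    have hmem : ∀ᶠ s in nhds t, s ∈ J := hJopen.mem_nhds htJ
    have hVpos : ∀ s ∈ J, V s ≠ 0 := by
      intro s hs; rw [hJ] at hs; exact ne_of_gt hs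
    have hdx : deriv x =ᶠ[nhds t] x1 := by
      filter_upwards [hmem] with s hs
      exact (hxd s (hVpos s hs)).deriv
    have h1 : deriv (deriv x) t = deriv x1 t := hdx.deriv_eq
    have h2 : deriv x1 t = x2 t := (hx1d t (hVpos t htJ)).deriv
    rw [h1, h2, hx2def, hx t]
    have hVt : V t ≠ 0 := hVpos t htJ
    field_simp
    ring
  · rw [hx 0, hτ0, hV0]
    simp [hA]
    field_simp
  · have h := (hxd 0 (by rw [hV0]; exact hu₀ne)).deriv
    rw [h]
    simp only [hx1def, hτ0, hV0, mul_zero, Real.cos_zero, Real.sin_zero]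
    simp only [hA, hB]
    field_simp
    ring
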